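/- Under the stated assumptions, the drifted solution is unique: if ỹ is any solution of y′(t) = λρ(t)y(t) + b(t) on [0,∞) such that ỹ(t+T) = ỹ(t) + γ̃(t) for all t ≥ 0 for some T-periodic function γ̃, then ỹ(0) = L(T) and hence ỹ(t) = e^{a(t)}·( L(T) + ∫₀ᵗ b(s)e^{−a(s)} ds ) for all t ≥ 0, where L(T) = (e^{a(T)}/(1 − e^{a(T)}))·∫₀ᵀ b(s)e^{−a(s)} ds − (e^{a(T)}/(1 − e^{a(T)})²)·∫₀ᵀ β(s)e^{−a(s)} ds. -/

import Mathlib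

open MeasureTheory intervalIntegral Real

/-- Uniqueness of the drifted solution: any solution `ỹ` of `y' = λ ρ y + b`
satisfying `ỹ(t+T) = ỹ(t) + γ̃(t)` with `γ̃` `T`-periodic must have `ỹ(0) = L(T)`, hence
`ỹ(t) = e^{a t}(L(T) + ∫₀ᵗ b e^{-a})`. -/
theorem drifted_solution_unique (lam T : ℝ) (hlam : lam < 0) (hT : 0 < T)
    (ρ : ℝ → ℝ) (hρc : ContinuousOn ρ (Set.Ici 0))
    (hρp : ∀ t ≥ (0:ℝ), ρ (t + T) = ρ t)
    (hρpos : 0 < ∫ s in (0:ℝ)..T, ρ s)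
    (a : ℝ → ℝ) (ha : ∀ t, a t = lam * ∫ s in (0:ℝ)..t, ρ s)
    (b β : ℝ → ℝ) (hbc : ContinuousOn b (Set.Ici 0)) (hβc : ContinuousOn β (Set.Ici 0))
    (hβp : ∀ t ≥ (0:ℝ), β (t + T) = β t)
    (hdrift : ∀ t ≥ (0:ℝ), b (t + T) = b t + β t)
    (L : ℝ)
    (hL : L = (Real.exp (a T) / (1 - Real.exp (a T))) *
        (∫ s in (0:ℝ)..T, b s * Real.exp (-(a s)))
      - (Real.exp (a T) / (1 - Real.exp (a T)) ^ 2) *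
        (∫ s in (0:ℝ)..T, β s * Real.exp (-(a s))))
    (ytilde : ℝ → ℝ)
    (hsol : ∀ t ≥ (0:ℝ), HasDerivAt ytilde (lam * ρ t * ytilde t + b t) t)
    (γtilde : ℝ → ℝ)
    (hγp : ∀ t ≥ (0:ℝ), γtilde (t + T) = γtilde t)
    (hydrift : ∀ t ≥ (0:ℝ), ytilde (t + T) = ytilde t + γtilde t) :
    ytilde 0 = L ∧
    ∀ t ≥ (0:ℝ), ytilde t = Real.exp (a t) *
      (L + ∫ s in (0:ℝ)..t, b s * Real.exp (-(a s))) := by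
  -- extend ρ, b, β continuously to all of ℝ
  set ρ' : ℝ → ℝ := fun t => ρ (max t 0) with hρ'def
  set b' : ℝ → ℝ := fun t => b (max t 0) with hb'def
  set β' : ℝ → ℝ := fun t => β (max t 0) with hβ'def
  have hmax : Continuous (fun t : ℝ => max t 0) := continuous_id.max continuous_const
  have hmem : ∀ t : ℝ, max t 0 ∈ Set.Ici (0:ℝ) := fun t => Set.mem_Ici.mpr (le_max_right _ _)
  have hρ'c : Continuous ρ' := hρc.comp_continuous hmax hmem
  have hb'c : Continuous b' := hbc.comp_continuous hmax hmem
  have hβ'c : Continuous β' := hβc.comp_continuous hmax hmem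
  have hρ'eq : ∀ t ≥ (0:ℝ), ρ' t = ρ t := fun t ht => by
    simp [hρ'def, max_eq_left ht]
  have hb'eq : ∀ t ≥ (0:ℝ), b' t = b t := fun t ht => by
    simp [hb'def, max_eq_left ht]
  have hβ'eq : ∀ t ≥ (0:ℝ), β' t = β t := fun t ht => by
    simp [hβ'def, max_eq_left ht]
  set A : ℝ → ℝ := fun t => lam * ∫ s in (0:ℝ)..t, ρ' s with hAdef
  have hAderiv : ∀ t : ℝ, HasDerivAt A (lam * ρ' t) t := by
    intro t
    exact (integral_hasDerivAt_right (hρ'c.intervalIntegrable 0 t)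
      hρ'c.aestronglyMeasurable.stronglyMeasurableAtFilter hρ'c.continuousAt).const_mul lam
  have hAc : Continuous A := by
    have : Differentiable ℝ A := fun t => (hAderiv t).differentiableAt
    exact this.continuous
  have haA : ∀ t ≥ (0:ℝ), a t = A t := by
    intro t ht
    rw [ha, hAdef]
    congr 1
    apply integral_congr
    intro s hs
    rw [Set.uIcc_of_le ht] at hs
    exact (hρ'eq s hs.1).symm
  -- the integrand
  set f : ℝ → ℝ := fun s => b' s * Real.exp (-(A s)) with hfdef
  have hfc : Continuous f := hb'c.mul (hAc.neg.rexp)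
  set g : ℝ → ℝ := fun t => ytilde t * Real.exp (-(A t)) - ∫ s in (0:ℝ)..t, f s with hgdef
  have hgderiv : ∀ x ≥ (0:ℝ), HasDerivAt g 0 x := by
    intro x hx
    have h1 := hsol x hx
    have h2 : HasDerivAt (fun u => Real.exp (-(A u)))
        (Real.exp (-(A x)) * (-(lam * ρ' x))) x := ((hAderiv x).neg).exp
    have h3 : HasDerivAt (fun u => ∫ s in (0:ℝ)..u, f s) (f x) x :=
      integral_hasDerivAt_right (hfc.intervalIntegrable 0 x)
        hfc.aestronglyMeasurable.stronglyMeasurableAtFilter hfc.continuousAt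
    have h4 := (h1.mul h2).sub h3
    refine h4.congr_deriv ?_
    rw [hfdef]
    simp only [hρ'eq x hx, hb'eq x hx]
    ring
  have hgc : ∀ t ≥ (0:ℝ), ContinuousOn g (Set.Icc 0 t) := by
    intro t ht x hx
    exact ((hgderiv x hx.1).continuousAt).continuousWithinAt
  have key : ∀ t ≥ (0:ℝ), ytilde t =
      Real.exp (A t) * (ytilde 0 + ∫ s in (0:ℝ)..t, f s) := by
    intro t ht
    have hg0 : g t = g 0 :=
      constant_of_has_deriv_right_zero (hgc t ht)
        (fun x hx => ((hgderiv x hx.1).hasDerivWithinAt)) t ⟨ht, le_refl t⟩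
    have h0 : g 0 = ytilde 0 := by
      simp [hgdef, hAdef, intervalIntegral.integral_same]
    rw [h0] at hg0
    have hexp : Real.exp (-(A t)) * Real.exp (A t) = 1 := by
      rw [← Real.exp_add]; simp
    rw [hgdef] at hg0
    simp only at hg0
    linear_combination Real.exp (A t) * hg0 - ytilde t * hexp
  -- additivity of A over one period
  have hAadd : ∀ x ≥ (0:ℝ), A (x + T) = A x + A T := by
    intro x hx
    have hi1 : ∫ s in (0:ℝ)..x, ρ' (s + T) = ∫ s in T..(x + T), ρ' s := by
      have := intervalIntegral.integral_comp_add_right (a := (0:ℝ)) (b := x) ρ' T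
      simpa using this
    have hi2 : ∫ s in (0:ℝ)..x, ρ' (s + T) = ∫ s in (0:ℝ)..x, ρ' s := by
      apply integral_congr
      intro s hs
      rw [Set.uIcc_of_le hx] at hs
      show ρ' (s + T) = ρ' s
      rw [hρ'eq (s + T) (by linarith [hs.1]), hρp s hs.1, hρ'eq s hs.1]
    have hi3 : (∫ s in (0:ℝ)..T, ρ' s) + ∫ s in T..(x + T), ρ' s
        = ∫ s in (0:ℝ)..(x + T), ρ' s :=
      integral_add_adjacent_intervals (hρ'c.intervalIntegrable _ _)
        (hρ'c.intervalIntegrable _ _)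
    rw [hAdef]
    simp only
    rw [← hi3, ← hi1, hi2]
    ring
  set E := Real.exp (A T) with hEdef
  have hE0 : 0 < E := Real.exp_pos _
  have hAT : A T < 0 := by
    have : (∫ s in (0:ℝ)..T, ρ' s) = ∫ s in (0:ℝ)..T, ρ s := by
      apply integral_congr
      intro s hs
      rw [Set.uIcc_of_le hT.le] at hs
      exact hρ'eq s hs.1
    rw [hAdef]; simp only [this]
    exact mul_neg_of_neg_of_pos hlam hρpos
  have hE1 : E < 1 := by rw [hEdef]; exact Real.exp_lt_one_iff.mpr hAT
  have h1E : (1:ℝ) - E ≠ 0 := by linarith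
  set B := ∫ s in (0:ℝ)..T, f s with hBdef
  set D := ∫ s in (0:ℝ)..T, β' s * Real.exp (-(A s)) with hDdef
  -- shifted integral
  have hshift : ∫ s in T..(T + T), f s = Real.exp (-(A T)) * (B + D) := by
    have hi1 : ∫ s in (0:ℝ)..T, f (s + T) = ∫ s in T..(T + T), f s := by
      have := intervalIntegral.integral_comp_add_right (a := (0:ℝ)) (b := T) f T
      simpa using this
    rw [← hi1]
    have hi2 : ∫ s in (0:ℝ)..T, f (s + T)
        = ∫ s in (0:ℝ)..T, (f s + β' s * Real.exp (-(A s))) * Real.exp (-(A T)) := by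
      apply integral_congr
      intro s hs
      rw [Set.uIcc_of_le hT.le] at hs
      have hs0 : (0:ℝ) ≤ s := hs.1
      rw [hfdef]
      simp only
      rw [hb'eq (s + T) (by linarith), hdrift s hs0, hAadd s hs0,
        hb'eq s hs0, hβ'eq s hs0]
      rw [neg_add, Real.exp_add]
      ring
    rw [hi2, intervalIntegral.integral_mul_const, intervalIntegral.integral_add (g := fun s => β' s * Real.exp (-(A s)))
      (hfc.intervalIntegrable _ _) ((hβ'c.mul (hAc.neg.rexp)).intervalIntegrable _ _)]
    rw [← hBdef, ← hDdef]; ring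
  have hint2T : ∫ s in (0:ℝ)..(T + T), f s = B + Real.exp (-(A T)) * (B + D) := by
    rw [← integral_add_adjacent_intervals (a := 0) (b := T) (c := T + T)
      (hfc.intervalIntegrable _ _) (hfc.intervalIntegrable _ _), ← hBdef, hshift]
  -- the three values
  set y0 := ytilde 0 with hy0def
  have hyT : ytilde T = E * (y0 + B) := by
    rw [key T hT.le, ← hBdef, ← hEdef]
  have hy2T : ytilde (T + T) = E * E * (y0 + B) + E * (B + D) := by
    rw [key (T + T) (by linarith), hint2T, hAadd T hT.le, Real.exp_add, ← hEdef]
    have : Real.exp (-(A T)) = E⁻¹ := by rw [Real.exp_neg, hEdef]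
    rw [this]
    field_simp
    ring
  -- the drift relation
  have heq : ytilde (T + T) - ytilde T = ytilde T - y0 := by
    have e1 := hydrift T hT.le
    have e2 := hydrift 0 (le_refl 0)
    have e3 := hγp 0 (le_refl 0)
    rw [zero_add] at e2 e3
    rw [e1, e2, e3]
    ring
  have hy0 : y0 = E * B / (1 - E) - E * D / (1 - E) ^ 2 := by
    rw [hyT, hy2T] at heq
    field_simp
    nlinarith [heq]
  -- convert integrals in L
  have hBeq : (∫ s in (0:ℝ)..T, b s * Real.exp (-(a s))) = B := by
    rw [hBdef]
    apply integral_congr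
    intro s hs
    rw [Set.uIcc_of_le hT.le] at hs
    rw [hfdef]; simp only
    rw [hb'eq s hs.1, haA s hs.1]
  have hDeq : (∫ s in (0:ℝ)..T, β s * Real.exp (-(a s))) = D := by
    rw [hDdef]
    apply integral_congr
    intro s hs
    rw [Set.uIcc_of_le hT.le] at hs
    show β s * Real.exp (-(a s)) = β' s * Real.exp (-(A s))
    rw [hβ'eq s hs.1, haA s hs.1]
  have hLval : L = E * B / (1 - E) - E * D / (1 - E) ^ 2 := by
    rw [hL, hBeq, hDeq, haA T hT.le, ← hEdef]
    ring
  have hy0L : y0 = L := by rw [hy0, hLval]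
  refine ⟨hy0L, ?_⟩
  intro t ht
  rw [key t ht, haA t ht, ← hy0L]
  congr 2
  apply integral_congr
  intro s hs
  rw [Set.uIcc_of_le ht] at hs
  show f s = b s * Real.exp (-(a s))
  rw [hfdef]; simp only
  rw [hb'eq s hs.1, haA s hs.1]
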